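/- Let ā(m) denote the number of cyclic signatures of length m. Then ā(1) = 3, ā(2) = 7, ā(3) = 15, and ā(m) = 3·ā(m−1) − ā(m−2) − ā(m−3) for all m ≥ 4. -/

import Mathlib

open scoped Classical

/-- The three-letter alphabet {uncovered, covered, occupied}. -/
inductive VState : Type
  | unc | cov | occ
  deriving DecidableEq

instance instFintypeVState : Fintype VState :=
  ⟨{VState.unc, VState.cov, VState.occ}, fun x => by cases x <;> simp⟩

/-- A signature of length `m`: a string over {unc, cov, occ} with no adjacent
(unc, occ) or (occ, unc) pair. -/
def IsSignature {m : ℕ} (σ : Fin m → VState) : Prop :=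
  ∀ i : Fin m, ∀ h : (i : ℕ) + 1 < m,
    ¬(σ i = VState.unc ∧ σ ⟨(i : ℕ) + 1, h⟩ = VState.occ) ∧
    ¬(σ i = VState.occ ∧ σ ⟨(i : ℕ) + 1, h⟩ = VState.unc)

/-- A cyclic signature: a signature where the adjacency constraint is also imposed
on the pair (first symbol, last symbol). -/
def IsCycSignature {m : ℕ} (σ : Fin m → VState) : Prop :=
  IsSignature σ ∧ ∀ h : 0 < m,
    ¬(σ ⟨0, h⟩ = VState.unc ∧ σ ⟨m - 1, Nat.sub_lt h Nat.one_pos⟩ = VState.occ) ∧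
    ¬(σ ⟨0, h⟩ = VState.occ ∧ σ ⟨m - 1, Nat.sub_lt h Nat.one_pos⟩ = VState.unc)

/-- `ā(m)`: the number of cyclic signatures of length `m`. -/
noncomputable def numCycSig (m : ℕ) : ℕ :=
  Fintype.card {σ : Fin m → VState // IsCycSignature σ}

/-! ### Auxiliary material -/

def Allowed (i j : VState) : Prop :=
  ¬(i = VState.unc ∧ j = VState.occ) ∧ ¬(i = VState.occ ∧ j = VState.unc)

instance : DecidableRel Allowed := fun i j => by unfold Allowed; infer_instance

def cA : ℕ → VState → VState → ℕ
  | 0, i, j => if i = j then 1 else 0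
  | n+1, i, j => ∑ k : VState, if Allowed i k then cA n k j else 0

lemma cA_rec (n : ℕ) (i j : VState) :
    (cA (n+3) i j : ℤ) = 3 * cA (n+2) i j - cA (n+1) i j - cA n i j := by
  induction n generalizing i j with
  | zero => revert i j; decide
  | succ n ih =>
    have unf : ∀ m, (cA (m+1) i j : ℤ)
        = ∑ k : VState, if Allowed i k then (cA m k j : ℤ) else 0 := by
      intro m
      simp [cA, Nat.cast_sum, apply_ite (Nat.cast : ℕ → ℤ)]
    rw [show n+1+3 = (n+3)+1 from by omega, show n+1+2 = (n+2)+1 from by omega,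
      show n+1+1 = n+1+1 from rfl]
    rw [unf (n+3), unf (n+2), unf (n+1), unf n, Finset.mul_sum, ← Finset.sum_sub_distrib,
      ← Finset.sum_sub_distrib]
    refine Finset.sum_congr rfl fun k _ => ?_
    by_cases h : Allowed i k
    · simp only [if_pos h, ih]
    · simp [h]

def fiberEquiv {α β : Type*} (f : α → β) (P : α → Prop) :
    {a // P a} ≃ Σ b : β, {a // f a = b ∧ P a} where
  toFun a := ⟨f a.1, a.1, rfl, a.2⟩
  invFun x := ⟨x.2.1, x.2.2.2⟩
  left_inv a := rfl
  right_inv x := by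
    obtain ⟨b, a, rfl, h⟩ := x
    rfl

lemma card_fiber {α β : Type*} [Fintype β] (f : α → β) (P : α → Prop)
    [Fintype {a // P a}] [∀ b : β, Fintype {a : α // f a = b ∧ P a}] :
    Fintype.card {a // P a} = ∑ b : β, Fintype.card {a // f a = b ∧ P a} :=
  calc Fintype.card {a // P a}
      = Fintype.card (Σ b : β, {a // f a = b ∧ P a}) := Fintype.card_congr (fiberEquiv f P)
    _ = ∑ b : β, Fintype.card {a // f a = b ∧ P a} := Fintype.card_sigma

lemma card_const_and {α : Type*} (Q : Prop) (P : α → Prop)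
    [Fintype {a // Q ∧ P a}] [Fintype {a // P a}] :
    Fintype.card {a // Q ∧ P a} = if Q then Fintype.card {a // P a} else 0 := by
  by_cases h : Q
  · rw [if_pos h]
    exact Fintype.card_congr (Equiv.subtypeEquivRight fun a => by simp [h])
  · rw [if_neg h]
    exact Fintype.card_eq_zero_iff.2 ⟨fun a => h a.2.1⟩

def Steps {n : ℕ} (p : Fin (n+1) → VState) : Prop :=
  ∀ k : Fin n, Allowed (p k.castSucc) (p k.succ)

lemma sig_iff {n : ℕ} (σ : Fin (n+1) → VState) : IsSignature σ ↔ Steps σ := by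
  constructor
  · intro h k
    have hlt : ((k.castSucc : Fin (n+1)) : ℕ) + 1 < n + 1 := by
      simp
    have := h k.castSucc hlt
    exact ⟨this.1, this.2⟩
  · intro h i hlt
    have hi : (i : ℕ) < n := by omega
    have := h ⟨i, hi⟩
    have e1 : (⟨(i : ℕ), hi⟩ : Fin n).castSucc = i := rfl
    have e2 : (⟨(i : ℕ), hi⟩ : Fin n).succ = ⟨(i : ℕ) + 1, hlt⟩ := rfl
    rw [e1, e2] at this
    exact ⟨this.1, this.2⟩

lemma cyc_iff {n : ℕ} (σ : Fin (n+1) → VState) :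
    IsCycSignature σ ↔ Steps σ ∧ Allowed (σ 0) (σ (Fin.last n)) := by
  unfold IsCycSignature
  rw [sig_iff]
  constructor
  · rintro ⟨h1, h2⟩
    have := h2 (Nat.succ_pos n)
    exact ⟨h1, this.1, this.2⟩
  · rintro ⟨h1, h2, h3⟩
    exact ⟨h1, fun _ => ⟨h2, h3⟩⟩

noncomputable def F (n : ℕ) (i j : VState) : ℕ :=
  Fintype.card {p : Fin (n+1) → VState // p 0 = i ∧ p (Fin.last n) = j ∧ Steps p}

lemma F_zero (i j : VState) : F 0 i j = if i = j then 1 else 0 := by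
  unfold F
  have e : {p : Fin 1 → VState // p 0 = i ∧ p (Fin.last 0) = j ∧ Steps p} ≃
      {x : VState // x = i ∧ x = j} :=
    (Equiv.funUnique (Fin 1) VState).subtypeEquiv fun p => by
      constructor
      · rintro ⟨h1, h2, _⟩; exact ⟨h1, h2⟩
      · rintro ⟨h1, h2⟩; exact ⟨h1, h2, fun k => k.elim0⟩
  rw [Fintype.card_congr e]
  by_cases h : i = j
  · subst h
    rw [if_pos rfl]
    rw [Fintype.card_congr (Equiv.subtypeEquivRight (q := fun x => x = i) fun x => by simp)]
    exact Fintype.card_subtype_eq i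
  · rw [if_neg h]
    exact Fintype.card_eq_zero_iff.2 ⟨fun x => h (x.2.1.symm.trans x.2.2)⟩

lemma F_succ (n : ℕ) (i j : VState) :
    F (n+1) i j = ∑ k : VState, if Allowed i k then F n k j else 0 := by
  unfold F
  rw [card_fiber (fun p : Fin (n+2) → VState => p (Fin.succ 0))
    (fun p => p 0 = i ∧ p (Fin.last (n+1)) = j ∧ Steps p)]
  refine Finset.sum_congr rfl fun k _ => ?_
  by_cases h : Allowed i k
  · rw [if_pos h]
    have e : {p : Fin (n+2) → VState //
          p (Fin.succ 0) = k ∧ p 0 = i ∧ p (Fin.last (n+1)) = j ∧ Steps p} ≃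
        {q : Fin (n+1) → VState // q 0 = k ∧ q (Fin.last n) = j ∧ Steps q} :=
      { toFun := fun p => ⟨Fin.tail p.1, p.2.1, by
          show p.1 ((Fin.last n).succ) = j
          rw [Fin.succ_last]
          exact p.2.2.2.1, fun t => by
          show Allowed (p.1 t.castSucc.succ) (p.1 t.succ.succ)
          rw [Fin.succ_castSucc]
          exact p.2.2.2.2 t.succ⟩
        invFun := fun q => ⟨Fin.cons i q.1, by
          obtain ⟨q, hq1, hq2, hq3⟩ := q
          refine ⟨?_, ?_, ?_, ?_⟩
          · simpa using hq1
          · simp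
          · have el : Fin.last (n+1) = (Fin.last n).succ := rfl
            rw [el, Fin.cons_succ]
            exact hq2
          · intro t
            induction t using Fin.cases with
            | zero => simpa [hq1] using h
            | succ t =>
              rw [← Fin.succ_castSucc, Fin.cons_succ, Fin.cons_succ]
              exact hq3 t⟩
        left_inv := fun p => Subtype.ext (by
          obtain ⟨p, h1, h2, h3, h4⟩ := p
          show Fin.cons i (Fin.tail p) = p
          rw [← h2]
          exact Fin.cons_self_tail p)
        right_inv := fun q => Subtype.ext
          (Fin.tail_cons (α := fun _ : Fin (n+2) => VState) i q.1) }
    exact Fintype.card_congr e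
  · rw [if_neg h]
    refine Fintype.card_eq_zero_iff.2 ⟨fun p => h ?_⟩
    have := p.2.2.2.2 (0 : Fin (n+1))
    rw [Fin.castSucc_zero, p.2.1, p.2.2.1] at this
    exact this

lemma F_eq_cA : ∀ (n : ℕ) (i j : VState), F n i j = cA n i j := by
  intro n
  induction n with
  | zero => intro i j; rw [F_zero]; rfl
  | succ n ih =>
    intro i j
    rw [F_succ]
    show _ = ∑ k : VState, if Allowed i k then cA n k j else 0
    exact Finset.sum_congr rfl fun k _ => by by_cases h : Allowed i k <;> simp [h, ih]

def fB (n : ℕ) : ℕ := ∑ i : VState, ∑ j : VState, if Allowed i j then cA n i j else 0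

lemma numCyc (n : ℕ) : numCycSig (n+1) = fB n := by
  unfold numCycSig fB
  rw [Fintype.card_congr (Equiv.subtypeEquivRight (q := fun σ : Fin (n+1) → VState =>
    Steps σ ∧ Allowed (σ 0) (σ (Fin.last n))) fun σ => cyc_iff σ)]
  rw [card_fiber (fun σ : Fin (n+1) → VState => σ 0)
    (fun σ => Steps σ ∧ Allowed (σ 0) (σ (Fin.last n)))]
  refine Finset.sum_congr rfl fun i _ => ?_
  rw [card_fiber (fun σ : Fin (n+1) → VState => σ (Fin.last n))
    (fun σ => σ 0 = i ∧ (Steps σ ∧ Allowed (σ 0) (σ (Fin.last n))))]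
  refine Finset.sum_congr rfl fun j _ => ?_
  have e := Equiv.subtypeEquivRight
    (p := fun σ : Fin (n+1) → VState =>
      σ (Fin.last n) = j ∧ σ 0 = i ∧ Steps σ ∧ Allowed (σ 0) (σ (Fin.last n)))
    (q := fun σ : Fin (n+1) → VState =>
      Allowed i j ∧ (σ 0 = i ∧ σ (Fin.last n) = j ∧ Steps σ))
    (fun σ => by
      constructor
      · rintro ⟨h1, h2, h3, h4⟩
        rw [h1, h2] at h4
        exact ⟨h4, h2, h1, h3⟩
      · rintro ⟨h4, h2, h1, h3⟩
        exact ⟨h1, h2, h3, by rw [h1, h2]; exact h4⟩)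
  rw [Fintype.card_congr e, card_const_and]
  by_cases hA : Allowed i j
  case neg => simp [hA]
  simp only [if_pos hA]
  have hF : Fintype.card {σ : Fin (n+1) → VState //
      σ 0 = i ∧ σ (Fin.last n) = j ∧ Steps σ} = cA n i j := by
    rw [← F_eq_cA]
    exact Fintype.card_congr (Equiv.refl _)
  exact hF

lemma fB_rec (n : ℕ) : (fB (n+3) : ℤ) = 3 * fB (n+2) - fB (n+1) - fB n := by
  unfold fB
  push_cast [apply_ite (Nat.cast : ℕ → ℤ)]
  rw [Finset.mul_sum, ← Finset.sum_sub_distrib, ← Finset.sum_sub_distrib]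
  refine Finset.sum_congr rfl fun i _ => ?_
  rw [Finset.mul_sum, ← Finset.sum_sub_distrib, ← Finset.sum_sub_distrib]
  refine Finset.sum_congr rfl fun j _ => ?_
  by_cases h : Allowed i j
  · simp only [if_pos h]
    exact cA_rec n i j
  · simp [h]

/-- `ā(1) = 3`, `ā(2) = 7`, `ā(3) = 15`, and
`ā(m) = 3·ā(m−1) − ā(m−2) − ā(m−3)` for all `m ≥ 4`. -/
theorem numCycSig_recurrence :
    numCycSig 1 = 3 ∧ numCycSig 2 = 7 ∧ numCycSig 3 = 15 ∧
      ∀ m : ℕ, 4 ≤ m →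
        (numCycSig m : ℤ) =
          3 * numCycSig (m - 1) - numCycSig (m - 2) - numCycSig (m - 3) := by
  have h1 : numCycSig 1 = 3 := by rw [show (1:ℕ) = 0+1 from rfl, numCyc]; decide
  have h2 : numCycSig 2 = 7 := by rw [show (2:ℕ) = 1+1 from rfl, numCyc]; decide
  have h3 : numCycSig 3 = 15 := by rw [show (3:ℕ) = 2+1 from rfl, numCyc]; decide
  refine ⟨h1, h2, h3, fun m hm => ?_⟩
  obtain ⟨n, rfl⟩ : ∃ n, m = n + 4 := ⟨m - 4, by omega⟩
  rw [show n + 4 - 1 = (n+2)+1 from by omega, show n + 4 - 2 = (n+1)+1 from by omega,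
    show n + 4 - 3 = n+1 from by omega, show n + 4 = (n+3)+1 from by omega]
  rw [numCyc, numCyc, numCyc, numCyc]
  exact_mod_cast fB_rec n
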